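/- Let D be a principal ideal domain (left and right) that is also a left V-ring (every simple left D-module is injective) and not a division ring. Then every finitely generated left D-module is the direct sum of a projective module and a semisimple module. -/

import Mathlib

universe u



section Aux

variable {D : Type u} [Ring D] [IsDomain D]

theorem noeth_of_principal {R : Type*} [Ring R] (h : ∀ I : Ideal R, I.IsPrincipal) :
    IsNoetherianRing R := by
  rw [isNoetherianRing_iff_ideal_fg]
  intro I
  obtain ⟨a, ha⟩ := (h I).principal
  exact ha ▸ Submodule.fg_span_singleton a

theorem ore_ind (r s : D) (hr : r ≠ 0) (hs : s ≠ 0) :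
    ∀ (m : ℕ) (c : Fin m → D), (∑ i, c i * (r * s ^ (i : ℕ))) = r * s ^ m →
    ∃ (r' s' : D), s' ≠ 0 ∧ s' * r = r' * s := by
  intro m
  induction m with
  | zero =>
    intro c h
    simp only [Finset.univ_eq_empty, Finset.sum_empty, pow_zero, mul_one] at h
    exact absurd h.symm hr
  | succ m ih =>
    intro c h
    rw [Fin.sum_univ_succ] at h
    have key : ∀ i : Fin m, c i.succ * (r * s ^ ((i.succ : Fin (m+1)) : ℕ))
        = (c i.succ * (r * s ^ (i : ℕ))) * s := by
      intro i
      have : ((i.succ : Fin (m+1)) : ℕ) = (i : ℕ) + 1 := rfl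
      rw [this, pow_succ, ← mul_assoc, ← mul_assoc, mul_assoc (c i.succ)]
    simp only [key] at h
    rw [← Finset.sum_mul] at h
    by_cases hc : c 0 = 0
    · apply ih (fun i => c i.succ)
      have h2 : (∑ i : Fin m, c i.succ * (r * s ^ (i : ℕ))) * s = (r * s ^ m) * s := by
        rw [mul_assoc, ← pow_succ]
        simpa [hc] using h
      exact mul_right_cancel₀ hs h2
    · refine ⟨r * s ^ m - ∑ i : Fin m, c i.succ * (r * s ^ (i : ℕ)), c 0, hc, ?_⟩
      have h3 : c 0 * r = r * s ^ (m+1) - (∑ i : Fin m, c i.succ * (r * s ^ (i : ℕ))) * s := by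
        rw [eq_sub_iff_add_eq]
        simpa using h
      rw [sub_mul, mul_assoc, ← pow_succ]
      exact h3

theorem ore_aux [IsNoetherianRing D] (r : D) {s : D} (hs : s ≠ 0) :
    ∃ (r' s' : D), s' ≠ 0 ∧ s' * r = r' * s := by
  rcases eq_or_ne r 0 with rfl | hr
  · exact ⟨0, 1, one_ne_zero, by simp⟩
  set f : ℕ →o Ideal D :=
    ⟨fun n => Ideal.span ((fun i => r * s ^ i) '' Set.Iic n),
     fun n m hnm => Ideal.span_mono (Set.image_mono (Set.Iic_subset_Iic.mpr hnm))⟩ with hf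
  obtain ⟨n, hn⟩ := monotone_stabilizes_iff_noetherian.mpr inferInstance f
  have hmem : r * s ^ (n+1) ∈ f n := by
    rw [hn (n+1) (Nat.le_succ n)]
    exact Ideal.subset_span ⟨n+1, Set.mem_Iic.mpr le_rfl, rfl⟩
  have himage : ((fun i => r * s ^ i) '' Set.Iic n) =
      Set.range (fun i : Fin (n+1) => r * s ^ (i : ℕ)) := by
    ext x
    constructor
    · rintro ⟨i, hi, rfl⟩
      exact ⟨⟨i, Nat.lt_succ_of_le hi⟩, rfl⟩
    · rintro ⟨i, rfl⟩
      exact ⟨(i : ℕ), Set.mem_Iic.mpr (Nat.lt_succ_iff.mp i.isLt), rfl⟩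
  rw [hf] at hmem
  change r * s ^ (n+1) ∈ Ideal.span ((fun i => r * s ^ i) '' Set.Iic n) at hmem
  rw [himage] at hmem
  rw [Ideal.span, Submodule.mem_span_range_iff_exists_fun] at hmem
  obtain ⟨c, hc⟩ := hmem
  exact ore_ind r s hr hs (n+1) c (by simpa [smul_eq_mul] using hc)

end Aux
section Aux2
variable {D : Type u} [Ring D] [IsDomain D]


theorem exists_minimal_gt [IsNoetherianRing Dᵐᵒᵖ]
    (hleft : ∀ I : Ideal D, I.IsPrincipal) {A : Ideal D} {a : D} (ha : a ≠ 0) (haA : a ∈ A)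
    (hA : A ≠ ⊤) : ∃ L, A < L ∧ ∀ L', A < L' → L' ≤ L → L' = L := by
  by_contra hmin
  push_neg at hmin
  have step : ∀ L : {L : Ideal D // A < L}, ∃ L' : {L : Ideal D // A < L}, L'.1 < L.1 := by
    rintro ⟨L, hL⟩
    obtain ⟨L', h1, h2, h3⟩ := hmin L hL
    exact ⟨⟨L', h1⟩, lt_of_le_of_ne h2 h3⟩
  choose next hnext using step
  set F : ℕ → {L : Ideal D // A < L} := fun n => next^[n] ⟨⊤, lt_top_iff_ne_top.mpr hA⟩ with hF
  have hdec : ∀ n, (F (n+1)).1 < (F n).1 := by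
    intro n
    rw [hF]
    simp only [Function.iterate_succ_apply']
    exact hnext _
  have hgen : ∀ n, ∃ b c : D, (F n).1 = Ideal.span {b} ∧ c * b = a := by
    intro n
    obtain ⟨b, hb⟩ := (hleft (F n).1).principal
    have : a ∈ Ideal.span {b} := by rw [Ideal.span, ← hb]; exact (le_of_lt (F n).2) haA
    obtain ⟨c, hc⟩ := Ideal.mem_span_singleton'.mp this
    exact ⟨b, c, hb, hc⟩
  choose b c hb hc using hgen
  have hbne : ∀ n, b n ≠ 0 := fun n h => ha (by rw [← hc n, h, mul_zero])
  have hcne : ∀ n, c n ≠ 0 := fun n h => ha (by rw [← hc n, h, zero_mul])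
  have hd : ∀ n, ∃ d, b (n+1) = d * b n := by
    intro n
    have hmem : b (n+1) ∈ Ideal.span {b n} := by
      rw [← hb n]
      refine le_of_lt (hdec n) ?_
      rw [hb (n+1)]
      exact Ideal.subset_span rfl
    obtain ⟨d, hd⟩ := Ideal.mem_span_singleton'.mp hmem
    exact ⟨d, hd.symm⟩
  choose d hdeq using hd
  have hcd : ∀ n, c n = c (n+1) * d n := by
    intro n
    have h1 : c (n+1) * (d n * b n) = c n * b n := by rw [← hdeq n, hc, hc]
    rw [← mul_assoc] at h1
    exact (mul_right_cancel₀ (hbne n) h1).symm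
  have gmono : Monotone (fun n => Ideal.span {MulOpposite.op (c n)} : ℕ → Ideal Dᵐᵒᵖ) := by
    apply monotone_nat_of_le_succ
    intro n
    rw [Ideal.span_singleton_le_iff_mem, Ideal.mem_span_singleton']
    exact ⟨MulOpposite.op (d n), by rw [← MulOpposite.op_mul, ← hcd n]⟩
  obtain ⟨n, hn⟩ := monotone_stabilizes_iff_noetherian.mpr inferInstance
    ⟨fun n => Ideal.span {MulOpposite.op (c n)}, gmono⟩
  have hmem : MulOpposite.op (c (n+1)) ∈ Ideal.span {MulOpposite.op (c n)} := by
    have h2 := hn (n+1) (Nat.le_succ n)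
    simp only [OrderHom.coe_mk] at h2
    rw [h2]
    exact Ideal.subset_span rfl
  obtain ⟨z, hz⟩ := Ideal.mem_span_singleton'.mp hmem
  have hthis : c n * MulOpposite.unop z = c (n+1) := by
    simpa using congrArg MulOpposite.unop hz
  have hce : c (n+1) * 1 = c (n+1) * (d n * MulOpposite.unop z) := by
    rw [mul_one, ← mul_assoc, ← hcd n, hthis]
  have hde : d n * MulOpposite.unop z = 1 := (mul_left_cancel₀ (hcne (n+1)) hce).symm
  have hdne : d n ≠ 0 := by
    intro h
    rw [h, zero_mul] at hde
    exact zero_ne_one hde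
  have hed : MulOpposite.unop z * d n = 1 := by
    have h1 : d n * (MulOpposite.unop z * d n) = d n * 1 := by
      rw [← mul_assoc, hde, one_mul, mul_one]
    exact mul_left_cancel₀ hdne h1
  have : (F (n+1)).1 = (F n).1 := by
    rw [hb (n+1), hb n, hdeq n]
    apply le_antisymm
    · rw [Ideal.span_singleton_le_iff_mem, Ideal.mem_span_singleton']
      exact ⟨d n, rfl⟩
    · rw [Ideal.span_singleton_le_iff_mem, Ideal.mem_span_singleton']
      exact ⟨MulOpposite.unop z, by rw [← mul_assoc, hed, one_mul]⟩
  exact absurd this (ne_of_lt (hdec n))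

theorem exists_atom_le_span [IsNoetherianRing Dᵐᵒᵖ]
    (hleft : ∀ I : Ideal D, I.IsPrincipal)
    {M : Type*} [AddCommGroup M] [Module D M] {x : M} (hx : x ≠ 0)
    {a : D} (ha : a ≠ 0) (hax : a • x = 0) :
    ∃ N : Submodule D M, IsAtom N ∧ N ≤ Submodule.span D {x} := by
  set ℓ : D →ₗ[D] M := LinearMap.toSpanSingleton D M x with hℓ
  set A : Ideal D := LinearMap.ker ℓ with hAdef
  have haA : a ∈ A := by
    simp only [hAdef, LinearMap.mem_ker, hℓ, LinearMap.toSpanSingleton_apply]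
    exact hax
  have hA : A ≠ ⊤ := by
    intro h
    have h1 : (1:D) ∈ A := h ▸ Submodule.mem_top
    simp only [hAdef, LinearMap.mem_ker, hℓ, LinearMap.toSpanSingleton_apply, one_smul] at h1
    exact hx h1
  obtain ⟨L, hAL, hLmin⟩ := exists_minimal_gt hleft ha haA hA
  refine ⟨Submodule.map ℓ L, ⟨?_, ?_⟩, ?_⟩
  · intro h
    exact hAL.not_ge (Submodule.map_le_iff_le_comap.mp h.le)
  · intro N' hN'
    by_cases hL' : Submodule.comap ℓ N' ⊓ L = L
    · exfalso
      have : L ≤ Submodule.comap ℓ N' := by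
        rw [← hL']; exact inf_le_left
      exact hN'.not_ge (Submodule.map_le_iff_le_comap.mpr this)
    · have hAL' : A ≤ Submodule.comap ℓ N' ⊓ L := by
        refine le_inf ?_ hAL.le
        intro y hy
        simp only [hAdef, LinearMap.mem_ker] at hy
        simpa [Submodule.mem_comap, hy] using N'.zero_mem
      have hA_eq : Submodule.comap ℓ N' ⊓ L = A := by
        by_contra hne
        exact hL' (hLmin _ (lt_of_le_of_ne hAL' (Ne.symm hne)) inf_le_right)
      rw [eq_bot_iff]
      intro y hy
      obtain ⟨l, hl, rfl⟩ := hN'.le hy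
      have : l ∈ Submodule.comap ℓ N' ⊓ L := ⟨hy, hl⟩
      rw [hA_eq] at this
      simpa using (LinearMap.mem_ker.mp this)
  · rintro y ⟨l, -, rfl⟩
    exact Submodule.mem_span_singleton.mpr ⟨l, rfl⟩
end Aux2
section Inj
variable {D : Type u} [Ring D]

theorem inj_of_subsingleton {Q : Type u} [AddCommGroup Q] [Module D Q] [Subsingleton Q] :
    Module.Injective D Q :=
  ⟨fun _ _ _ _ _ _ f _ g => ⟨0, fun x => Subsingleton.elim _ _⟩⟩

theorem inj_prod {Q₁ Q₂ : Type u} [AddCommGroup Q₁] [Module D Q₁] [AddCommGroup Q₂] [Module D Q₂]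
    (h1 : Module.Injective D Q₁) (h2 : Module.Injective D Q₂) :
    Module.Injective D (Q₁ × Q₂) := by
  constructor
  intro X Y _ _ _ _ f hf g
  obtain ⟨g1, hg1⟩ := h1.out f hf ((LinearMap.fst D Q₁ Q₂).comp g)
  obtain ⟨g2, hg2⟩ := h2.out f hf ((LinearMap.snd D Q₁ Q₂).comp g)
  refine ⟨g1.prod g2, fun x => ?_⟩
  have e1 := hg1 x
  have e2 := hg2 x
  simp only [LinearMap.comp_apply, LinearMap.fst_apply, LinearMap.snd_apply] at e1 e2
  simp [LinearMap.prod_apply, e1, e2]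

theorem inj_equiv {Q Q' : Type u} [AddCommGroup Q] [Module D Q] [AddCommGroup Q'] [Module D Q']
    (e : Q ≃ₗ[D] Q') (h : Module.Injective D Q) : Module.Injective D Q' := by
  constructor
  intro X Y _ _ _ _ f hf g
  obtain ⟨h', hh⟩ := h.out f hf ((e.symm : Q' →ₗ[D] Q).comp g)
  refine ⟨(e : Q →ₗ[D] Q').comp h', fun x => ?_⟩
  have := hh x
  simp only [LinearMap.comp_apply, LinearEquiv.coe_coe] at this ⊢
  rw [this, LinearEquiv.apply_symm_apply]

theorem inj_finsetSup {M : Type u} [AddCommGroup M] [Module D M]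
    (hV : ∀ (S : Type u) [AddCommGroup S] [Module D S], IsSimpleModule D S →
      Module.Injective D S)
    (t : Finset (Submodule D M)) (ht : ∀ A ∈ t, IsAtom A) :
    Module.Injective D ↥(t.sup id) := by
  classical
  induction t using Finset.cons_induction with
  | empty =>
    rw [Finset.sup_empty]
    exact inj_of_subsingleton
  | cons A t hA ih =>
    have hatomA : IsAtom A := ht A (Finset.mem_cons_self A t)
    have ihinj : Module.Injective D ↥(t.sup id) :=
      ih (fun B hB => ht B (Finset.mem_cons_of_mem hB))
    rw [Finset.sup_cons]
    by_cases hle : A ≤ t.sup id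
    · rw [id, sup_eq_right.mpr hle]
      exact ihinj
    · have hdisj : A ⊓ t.sup id = ⊥ := by
        refine hatomA.2 _ (lt_of_le_of_ne inf_le_left fun h => hle ?_)
        exact inf_eq_left.mp h
      set f : (↥A × ↥(t.sup id)) →ₗ[D] M := A.subtype.coprod (t.sup id).subtype with hf
      have hinjf : Function.Injective f := by
        rw [← LinearMap.ker_eq_bot, eq_bot_iff]
        rintro ⟨⟨a, haA⟩, ⟨w, hw⟩⟩ hker
        have hsum : a + w = 0 := hker
        have haw : a = -w := eq_neg_of_add_eq_zero_left hsum
        have haW : a ∈ A ⊓ t.sup id := ⟨haA, by rw [haw]; exact Submodule.neg_mem _ hw⟩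
        rw [hdisj] at haW
        have ha0 : a = 0 := haW
        have hw0 : w = 0 := by rw [ha0, zero_add] at hsum; exact hsum
        refine Submodule.mem_bot _ |>.mpr ?_
        ext <;> simp [ha0, hw0]
      have hrange : LinearMap.range f = A ⊔ t.sup id := by
        rw [hf, LinearMap.range_coprod, Submodule.range_subtype, Submodule.range_subtype]
      haveI hAinj : Module.Injective D ↥A :=
        hV ↥A ((isSimpleModule_iff_isAtom (m := A)).mpr hatomA)
      exact inj_equiv ((LinearEquiv.ofInjective f hinjf).trans
        (LinearEquiv.ofEq _ _ hrange)) (inj_prod hAinj ihinj)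

end Inj
set_option maxHeartbeats 1000000 in
set_option synthInstance.maxHeartbeats 400000 in

theorem projective_submodule_pi {D : Type u} [Ring D] [IsDomain D]
    (hleft : ∀ I : Ideal D, I.IsPrincipal) :
    ∀ (n : ℕ) (N : Submodule D (Fin n → D)), Module.Projective D ↥N := by
  intro n
  induction n with
  | zero =>
    intro N
    haveI : Subsingleton (Fin 0 → D) := by infer_instance
    haveI : Subsingleton ↥N := by infer_instance
    infer_instance
  | succ n ih =>
    intro N
    set φ : ↥N →ₗ[D] D := (LinearMap.proj (Fin.last n)).comp N.subtype with hφ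
    obtain ⟨cgen, hcgen⟩ := (hleft (LinearMap.range φ)).principal
    set ini : (Fin (n+1) → D) →ₗ[D] (Fin n → D) :=
      LinearMap.pi (fun i => LinearMap.proj i.castSucc) with hini
    by_cases hc : cgen = 0
    · have hφ0 : ∀ x : ↥N, φ x = 0 := by
        intro x
        have hmem : φ x ∈ LinearMap.range φ := ⟨x, rfl⟩
        have hbot : LinearMap.range φ = ⊥ := by
          rw [hcgen, hc]
          exact Submodule.span_singleton_eq_bot.mpr rfl
        rw [hbot] at hmem
        simpa using hmem
      set ψ : ↥N →ₗ[D] (Fin n → D) := ini.comp N.subtype with hψ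
      have hinjψ : Function.Injective ψ := by
        rw [← LinearMap.ker_eq_bot, eq_bot_iff]
        intro x hx
        have hx0 : ψ x = 0 := hx
        have h1 : ∀ i : Fin n, (x : Fin (n+1) → D) i.castSucc = 0 := fun i => congrFun hx0 i
        have h2 : (x : Fin (n+1) → D) (Fin.last n) = 0 := hφ0 x
        have hxx : (x : Fin (n+1) → D) = 0 := by
          funext i
          refine Fin.lastCases ?_ ?_ i
          · exact h2
          · exact h1
        simp only [Submodule.mem_bot]
        exact Subtype.ext hxx
      haveI := ih (LinearMap.range ψ)
      exact Module.Projective.of_equiv (LinearEquiv.ofInjective ψ hinjψ).symm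
    · set μ : D →ₗ[D] D := LinearMap.toSpanSingleton D D cgen with hμ
      have hinjμ : Function.Injective μ := by
        rw [← LinearMap.ker_eq_bot, eq_bot_iff]
        intro x hx
        have : x * cgen = 0 := hx
        simpa using (mul_eq_zero.mp this).resolve_right hc
      have hrangeμ : LinearMap.range φ = LinearMap.range μ := by
        rw [hcgen, hμ, LinearMap.span_singleton_eq_range]
      have hmem0 : ∀ x : ↥N, φ x ∈ LinearMap.range μ :=
        fun x => hrangeμ ▸ LinearMap.mem_range_self φ x
      set cod : ↥N →ₗ[D] (LinearMap.range μ) :=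
        φ.codRestrict (LinearMap.range μ) hmem0 with hcod
      set θ : ↥N →ₗ[D] D := ((LinearEquiv.ofInjective μ hinjμ).symm :
          (LinearMap.range μ) →ₗ[D] D).comp cod with hθ
      have hθap : ∀ x : ↥N, θ x = (LinearEquiv.ofInjective μ hinjμ).symm (cod x) := fun _ => rfl
      have hker : ∀ x : ↥N, θ x = 0 ↔ φ x = 0 := by
        intro x
        rw [hθap, LinearEquiv.map_eq_zero_iff, Subtype.ext_iff]
        simp [hcod]
      have hsurj : Function.Surjective θ := by
        intro d
        have hmem : μ d ∈ LinearMap.range φ := by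
          rw [hrangeμ]; exact LinearMap.mem_range_self μ d
        obtain ⟨x, hx⟩ := hmem
        refine ⟨x, ?_⟩
        rw [hθap, LinearEquiv.symm_apply_eq]
        refine Subtype.ext ?_
        simp [hcod, hx, LinearEquiv.ofInjective_apply]
      obtain ⟨σ, hσ⟩ := Module.projective_lifting_property θ LinearMap.id hsurj
      have hσap : ∀ d, θ (σ d) = d := fun d => congrFun (congrArg DFunLike.coe hσ) d
      have hinjσ : Function.Injective σ := by
        intro d d' h
        have := congrArg θ h
        rwa [hσap, hσap] at this
      have hcompl : IsCompl (LinearMap.ker θ) (LinearMap.range σ) := by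
        constructor
        · rw [disjoint_iff, eq_bot_iff]
          rintro x ⟨hk, ⟨d, rfl⟩⟩
          have : θ (σ d) = 0 := hk
          rw [hσap] at this
          simp [this]
        · rw [codisjoint_iff, eq_top_iff]
          intro x _
          have h1 : x - σ (θ x) ∈ LinearMap.ker θ := by
            rw [LinearMap.mem_ker, map_sub, hσap, sub_self]
          have : x = (x - σ (θ x)) + σ (θ x) := by abel
          rw [this]
          exact Submodule.add_mem_sup h1 (LinearMap.mem_range_self σ (θ x))
      -- ker θ is projective
      set ξ : ↥(LinearMap.ker θ) →ₗ[D] (Fin n → D) :=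
        ini.comp (N.subtype.comp (LinearMap.ker θ).subtype) with hξ
      have hinjξ : Function.Injective ξ := by
        refine (LinearMap.ker_eq_bot (M := ↥(LinearMap.ker θ)) (M₂ := Fin n → D) (f := ξ)).mp ((LinearMap.ker_eq_bot' (f := ξ)).mpr ?_)
        intro x hx0
        have h1 : ∀ i : Fin n, ((x : ↥N) : Fin (n+1) → D) i.castSucc = 0 :=
          fun i => congrFun hx0 i
        have h2 : ((x : ↥N) : Fin (n+1) → D) (Fin.last n) = 0 := by
          have := (hker (x : ↥N)).mp x.2
          exact this
        have hxx : ((x : ↥N) : Fin (n+1) → D) = 0 := by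
          funext i
          refine Fin.lastCases ?_ ?_ i
          · exact h2
          · exact h1
        exact Subtype.ext (Subtype.ext hxx)
      haveI hproj1 : Module.Projective D ↥(LinearMap.ker θ) := by
        haveI := ih (LinearMap.range ξ)
        exact Module.Projective.of_equiv (LinearEquiv.ofInjective ξ hinjξ).symm
      haveI hproj2 : Module.Projective D ↥(LinearMap.range σ) :=
        Module.Projective.of_equiv (LinearEquiv.ofInjective σ hinjσ)
      haveI : Module.Projective D (↥(LinearMap.ker θ) × ↥(LinearMap.range σ)) := inferInstance
      exact Module.Projective.of_equiv (Submodule.prodEquivOfIsCompl _ _ hcompl)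
theorem rightOre' {D : Type u} [Ring D] [IsDomain D] [IsNoetherianRing Dᵐᵒᵖ] (x : D) {s : D}
    (hs : s ≠ 0) : ∃ (b t : D), t ≠ 0 ∧ x * t = s * b := by
  obtain ⟨r', s', hs', h⟩ := ore_aux (D := Dᵐᵒᵖ) (MulOpposite.op x)
    (s := MulOpposite.op s) (by simpa using hs)
  refine ⟨MulOpposite.unop r', MulOpposite.unop s', by simpa using hs', ?_⟩
  have h2 := congrArg MulOpposite.unop h
  simpa using h2

open OreLocalization in
theorem projective_of_torsionfree {D : Type u} [Ring D] [IsDomain D]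
    [IsNoetherianRing D] [IsNoetherianRing Dᵐᵒᵖ]
    (hleft : ∀ I : Ideal D, I.IsPrincipal)
    (X : Type u) [AddCommGroup X] [Module D X] [Module.Finite D X]
    (htf : ∀ (d : D) (x : X), d • x = 0 → d = 0 ∨ x = 0) : Module.Projective D X := by
  classical
  haveI : OreSet (nonZeroDivisors D) := by
    refine Classical.choice (nonempty_oreSet_iff_of_noZeroDivisors.mpr ?_)
    intro r s
    obtain ⟨r', s', hs', h⟩ := ore_aux r (s := (s : D))
      (mem_nonZeroDivisors_iff_ne_zero.mp s.2)
    exact ⟨r', ⟨s', mem_nonZeroDivisors_of_ne_zero hs'⟩, h⟩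
  -- the numerator maps
  set νr : D →+* OreLocalization (nonZeroDivisors D) D := numeratorRingHom with hνr
  have hνrapp : ∀ d : D, νr d = (d /ₒ (1 : nonZeroDivisors D)) := fun d => rfl
  have hνrinj : Function.Injective νr := by
    refine numeratorHom_inj ?_
    intro x hx
    rw [mem_nonZeroDivisorsLeft_iff]
    intro y hxy
    rcases mul_eq_zero.mp hxy with h | h
    · exact absurd h (mem_nonZeroDivisors_iff_ne_zero.mp hx)
    · exact h
  have hνrne : ∀ d : D, d ≠ 0 → νr d ≠ 0 := by
    intro d hd h0
    exact hd (hνrinj (by rw [h0, map_zero]))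
  have hsmulQ : ∀ (d : D) (q : OreLocalization (nonZeroDivisors D) D), d • q = νr d * q := by
    intro d q
    have h1 := smul_one_oreDiv_one_smul (R := D) (M := D) (X := D)
      (S := nonZeroDivisors D) d q
    rw [← h1]
    have h2 : (d • (1:D)) = d := by simp
    rw [h2]
    rfl
  -- the canonical map ι : X →ₗ[D] XL
  set ι : X →ₗ[D] OreLocalization (nonZeroDivisors D) X :=
    { toFun := fun x => x /ₒ (1 : nonZeroDivisors D)
      map_add' := fun x y => by
        show (x + y) /ₒ (1 : nonZeroDivisors D) =
          x /ₒ (1 : nonZeroDivisors D) + y /ₒ (1 : nonZeroDivisors D)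
        rw [add_oreDiv]
      map_smul' := fun d x => by
        show (d • x) /ₒ (1 : nonZeroDivisors D) = d • (x /ₒ (1 : nonZeroDivisors D))
        rw [smul_oreDiv_one] } with hι
  have hιinj : Function.Injective ι := by
    intro x y hxy
    have h1 : (x /ₒ (1 : nonZeroDivisors D) : OreLocalization (nonZeroDivisors D) X) =
        y /ₒ (1 : nonZeroDivisors D) := hxy
    rw [oreDiv_eq_iff] at h1
    obtain ⟨u, v, h2, h3⟩ := h1
    have h3' : (u : D) = v := by simpa using h3
    rw [Submonoid.smul_def] at h2
    have h4 : (u : D) • y = (u : D) • x := by rw [h2, ← h3']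
    have h5 : (u : D) • (y - x) = 0 := by rw [smul_sub, h4, sub_self]
    rcases htf _ _ h5 with h6 | h6
    · exact absurd h6 (mem_nonZeroDivisors_iff_ne_zero.mp u.2)
    · exact (sub_eq_zero.mp h6).symm
  -- XL is a finite-dimensional Q-vector space
  obtain ⟨m, g, hg⟩ := Module.Finite.exists_fin (R := D) (M := X)
  have hspan : Submodule.span (OreLocalization (nonZeroDivisors D) D)
      (Set.range (fun i => ι (g i))) = ⊤ := by
    rw [eq_top_iff]
    intro z _
    induction z using OreLocalization.ind with
    | _ x s =>
      have hx : x ∈ Submodule.span D (Set.range g) := by rw [hg]; trivial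
      have h1 : ι x ∈ Submodule.map ι (Submodule.span D (Set.range g)) :=
        Submodule.mem_map_of_mem hx
      rw [Submodule.map_span] at h1
      have h2 : Submodule.span D (⇑ι '' Set.range g) ≤
          (Submodule.span (OreLocalization (nonZeroDivisors D) D)
            (Set.range (fun i => ι (g i)))).restrictScalars D := by
        rw [Submodule.span_le]
        rintro _ ⟨_, ⟨i, rfl⟩, rfl⟩
        exact Submodule.subset_span ⟨i, rfl⟩
      have h3 : (x /ₒ s : OreLocalization (nonZeroDivisors D) X) =
          ((1 /ₒ s : OreLocalization (nonZeroDivisors D) D)) • (ι x) := by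
        show _ = (1 /ₒ s : OreLocalization (nonZeroDivisors D) D) •
          (x /ₒ (1 : nonZeroDivisors D))
        rw [OreLocalization.one_div_smul, one_mul]
      rw [h3]
      exact Submodule.smul_mem _ _ (h2 h1)
  haveI hfinQ : Module.Finite (OreLocalization (nonZeroDivisors D) D)
      (OreLocalization (nonZeroDivisors D) X) :=
    ⟨by rw [← hspan]; exact Submodule.fg_span (Set.finite_range _)⟩
  -- clearing denominators
  have hclear : ∀ q : OreLocalization (nonZeroDivisors D) D,
      ∃ (a t : D), t ≠ 0 ∧ q * νr t = νr a := by
    intro q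
    induction q using OreLocalization.ind with
    | _ x s =>
      obtain ⟨b, t, ht, hxt⟩ := rightOre' x (mem_nonZeroDivisors_iff_ne_zero.mp s.2)
      refine ⟨b, t, ht, ?_⟩
      have hcancel : ((s : D) /ₒ (1 : nonZeroDivisors D)) * (x /ₒ s) =
          x /ₒ (1 : nonZeroDivisors D) := OreLocalization.mul_cancel
      have h1 : ((s : D) /ₒ (1 : nonZeroDivisors D)) * ((x /ₒ s) * νr t) =
          ((s : D) /ₒ (1 : nonZeroDivisors D)) * νr b := by
        rw [← mul_assoc, hcancel, ← hνrapp, ← hνrapp, ← map_mul, ← map_mul, hxt]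
      have hs0 : ((s : D) /ₒ (1 : nonZeroDivisors D) :
          OreLocalization (nonZeroDivisors D) D) ≠ 0 := by
        rw [← hνrapp]
        exact hνrne _ (mem_nonZeroDivisors_iff_ne_zero.mp s.2)
      exact mul_left_cancel₀ hs0 h1
  have hclearlist : ∀ (l : List (OreLocalization (nonZeroDivisors D) D)), ∃ t : D, t ≠ 0 ∧
      ∀ q ∈ l, ∃ a : D, q * νr t = νr a := by
    intro l
    induction l with
    | nil => exact ⟨1, one_ne_zero, by simp⟩
    | cons q l ihl =>
      obtain ⟨t, ht, hl⟩ := ihl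
      obtain ⟨a', t', ht', hq⟩ := hclear (q * νr t)
      refine ⟨t * t', mul_ne_zero ht ht', ?_⟩
      intro p hp
      rcases List.mem_cons.mp hp with rfl | hp
      · exact ⟨a', by rw [map_mul, ← mul_assoc, hq]⟩
      · obtain ⟨a, ha⟩ := hl p hp
        exact ⟨a * t', by rw [map_mul, ← mul_assoc, ha, ← map_mul]⟩
  -- basis of XL over Q
  set k := Module.finrank (OreLocalization (nonZeroDivisors D) D)
    (OreLocalization (nonZeroDivisors D) X) with hk
  set e := (Module.finBasis (OreLocalization (nonZeroDivisors D) D)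
    (OreLocalization (nonZeroDivisors D) X)).equivFun with he
  set F0 : X →ₗ[D] (Fin k → OreLocalization (nonZeroDivisors D) D) :=
    ((e.restrictScalars D).toLinearMap).comp ι with hF0
  have hF0inj : Function.Injective F0 := by
    intro x y h
    exact hιinj ((e.restrictScalars D).injective h)
  -- common denominator for all the coordinates of generators
  obtain ⟨t, ht, htl⟩ := hclearlist
    ((List.finRange m).flatMap (fun i => (List.finRange k).map (fun j => F0 (g i) j)))
  have hcoord : ∀ (i : Fin m) (j : Fin k), ∃ a : D, F0 (g i) j * νr t = νr a := by
    intro i j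
    refine htl _ ?_
    rw [List.mem_flatMap]
    exact ⟨i, List.mem_finRange i, List.mem_map.mpr ⟨j, List.mem_finRange j, rfl⟩⟩
  choose acoord hacoord using hcoord
  -- right multiplication by t
  set ρ : (Fin k → OreLocalization (nonZeroDivisors D) D) →ₗ[D]
      (Fin k → OreLocalization (nonZeroDivisors D) D) :=
    { toFun := fun v j => v j * νr t
      map_add' := fun v w => by
        funext j
        show (v j + w j) * νr t = v j * νr t + w j * νr t
        rw [add_mul]
      map_smul' := fun d v => by
        funext j
        show (d • v j) * νr t = d • (v j * νr t)
        rw [hsmulQ, hsmulQ, mul_assoc] } with hρ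
  have hρinj : Function.Injective ρ := by
    intro v w h
    funext j
    have h1 : v j * νr t = w j * νr t := congrFun h j
    exact mul_right_cancel₀ (hνrne t ht) h1
  set F : X →ₗ[D] (Fin k → OreLocalization (nonZeroDivisors D) D) := ρ.comp F0 with hF
  have hFinj : Function.Injective F := fun x y h => hF0inj (hρinj h)
  -- the D-lattice
  set νlin : D →ₗ[D] OreLocalization (nonZeroDivisors D) D :=
    { toFun := fun d => νr d
      map_add' := fun a b => by
        show νr (a + b) = νr a + νr b
        rw [map_add]
      map_smul' := fun d a => by
        show νr (d • a) = d • νr a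
        rw [smul_eq_mul, map_mul, ← hsmulQ] } with hνlin
  set νpi : (Fin k → D) →ₗ[D] (Fin k → OreLocalization (nonZeroDivisors D) D) :=
    LinearMap.pi (fun j => νlin.comp (LinearMap.proj j)) with hνpi
  have hνpiinj : Function.Injective νpi := by
    intro v w h
    funext j
    exact hνrinj (congrFun h j)
  have hrangeF : LinearMap.range F ≤ LinearMap.range νpi := by
    rw [LinearMap.range_eq_map, ← hg, Submodule.map_span, Submodule.span_le]
    rintro _ ⟨_, ⟨i, rfl⟩, rfl⟩
    refine ⟨acoord i, ?_⟩
    funext j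
    show νr (acoord i j) = _
    rw [← hacoord i j]
    rfl
  set N : Submodule D (Fin k → D) := Submodule.comap νpi (LinearMap.range F) with hN
  have hmapN : Submodule.map νpi N = LinearMap.range F := by
    rw [hN, Submodule.map_comap_eq]
    exact inf_eq_right.mpr hrangeF
  haveI := projective_submodule_pi hleft k N
  have eqv : ↥N ≃ₗ[D] X :=
    ((Submodule.equivMapOfInjective νpi hνpiinj N).trans
      (LinearEquiv.ofEq _ _ hmapN)).trans (LinearEquiv.ofInjective F hFinj).symm
  exact Module.Projective.of_equiv eqv
section Main
variable {D : Type u} [Ring D] [IsDomain D]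

/-- Let `D` be a (left and right) principal ideal domain which is a left V-ring
(every simple left `D`-module is injective) and not a division ring. Then every
finitely generated left `D`-module is a direct sum of a projective module and a
semisimple module. -/
theorem stmt13 (D : Type u) [Ring D] [IsDomain D]
    (hleft : ∀ I : Ideal D, I.IsPrincipal)
    (hright : ∀ I : Ideal Dᵐᵒᵖ, I.IsPrincipal)
    (hV : ∀ (S : Type u) [AddCommGroup S] [Module D S], IsSimpleModule D S →
      Module.Injective D S)
    (hnotdiv : ∃ x : D, x ≠ 0 ∧ ¬IsUnit x)
    (M : Type u) [AddCommGroup M] [Module D M] [Module.Finite D M] :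
    ∃ P S : Submodule D M, IsCompl P S ∧ Module.Projective D P ∧ IsSemisimpleModule D S := by
  classical
  haveI hnoe : IsNoetherianRing D := noeth_of_principal hleft
  haveI hnoeop : IsNoetherianRing Dᵐᵒᵖ := noeth_of_principal hright
  haveI : IsNoetherian D M := isNoetherian_of_isNoetherianRing_of_finite D M
  set S : Submodule D M := sSup {A : Submodule D M | IsAtom A} with hSdef
  -- semisimplicity of S
  have hsemi : IsSemisimpleModule D ↥S := by
    rw [hSdef, sSup_eq_iSup]
    refine isSemisimpleModule_biSup_of_isSemisimpleModule_submodule (p := id) ?_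
    intro A hA
    haveI : IsSimpleModule D ↥A := (isSimpleModule_iff_isAtom (m := A)).mpr hA
    show IsSemisimpleModule D ↥A
    infer_instance
  -- S is a finite sup of atoms
  have hfg : S.FG := IsNoetherian.noetherian S
  obtain ⟨t, hts, hle⟩ := ((CompleteLattice.isCompactElement_iff_exists_le_sSup_of_le_sSup (k := S)).mp ((Submodule.fg_iff_compact S).mp hfg))
    {A : Submodule D M | IsAtom A} (le_of_eq hSdef)
  have hsup : t.sup id = S := le_antisymm
    (Finset.sup_le fun A hA => le_sSup (hts hA)) hle
  have hinj : Module.Injective D ↥S := by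
    rw [← hsup]
    exact inj_finsetSup hV t (fun A hA => hts hA)
  -- splitting
  obtain ⟨r, hr⟩ := hinj.out S.subtype S.injective_subtype LinearMap.id
  set P : Submodule D M := LinearMap.ker r with hPdef
  have hcompl : IsCompl P S := by
    constructor
    · rw [disjoint_iff, eq_bot_iff]
      rintro x ⟨hxP, hxS⟩
      have h1 : r x = ⟨x, hxS⟩ := by
        have := hr ⟨x, hxS⟩
        simpa using this
      have h2 : r x = 0 := hxP
      rw [h2] at h1
      simpa using congrArg (Submodule.subtype S) h1.symm
    · rw [codisjoint_iff, eq_top_iff]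
      intro x _
      have hxP : x - ↑(r x) ∈ P := by
        rw [hPdef, LinearMap.mem_ker, map_sub]
        have h3 := hr (r x)
        simp only [LinearMap.id_coe, id_eq, Submodule.coe_subtype] at h3
        rw [sub_eq_zero]
        exact h3.symm
      have : x = (x - ↑(r x)) + ↑(r x) := by abel
      rw [this]
      exact Submodule.add_mem_sup hxP (r x).2
  -- torsion-freeness of P
  have htf : ∀ (d : D) (y : ↥P), d • y = 0 → d = 0 ∨ y = 0 := by
    intro d y hdy
    by_contra hcon
    push_neg at hcon
    have hy : (y : M) ≠ 0 := fun h => hcon.2 (Subtype.ext h)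
    have hdx : d • (y : M) = 0 := by
      have := congrArg (Submodule.subtype P) hdy
      simpa using this
    obtain ⟨N, hN, hNle⟩ := exists_atom_le_span hleft hy hcon.1 hdx
    have hNP : N ≤ P := hNle.trans (Submodule.span_le.mpr (by simpa using y.2))
    have hNS : N ≤ S := le_sSup hN
    exact hN.1 (le_bot_iff.mp ((le_inf hNP hNS).trans hcompl.disjoint.le_bot))
  haveI hfinP : Module.Finite D ↥P :=
    Module.Finite.equiv (Submodule.quotientEquivOfIsCompl S P hcompl.symm)
  have hproj : Module.Projective D ↥P := projective_of_torsionfree hleft ↥P htf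
  exact ⟨P, S, hcompl, hproj, hsemi⟩

end Main
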